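/- arXiv:2001.03750 — 3 statements merged into one kernel-verified Lean document; each statement's English description precedes it below -/
import Mathlib

section
/- Unit triangular factorization of the matrix symplectic group: for every real 2d-by-2d symplectic matrix H (i.e., H^T J H = J), there exist symmetric d-by-d real matrices S_1, S_2, ..., S_9 such that H = P_9 P_8 ... P_2 P_1, where P_i is the unit upper triangular symplectic block matrix [[I, S_i],[0, I]] for odd i and the unit lower triangular symplectic block matrix [[I, 0],[S_i, I]] for even i. In other words, SP = L_9. -/
open Matrix

open Polynomial in

private lemma pairing_exists (g : ℝ[X]) (hg : g ≠ 0) :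
    ∃ β : (ℝ[X] ⧸ Submodule.span ℝ[X] {g}) → (ℝ[X] ⧸ Submodule.span ℝ[X] {g}) → ℝ,
      (∀ x y, β x y = β y x) ∧
      (∀ x x' y, β (x + x') y = β x y + β x' y) ∧
      (∀ (c : ℝ[X]) x y, β (c • x) y = β x (c • y)) ∧
      (∀ (c : ℝ) x y, β ((C c : ℝ[X]) • x) y = c * β x y) ∧
      (∀ x, x ≠ 0 → ∃ y, β x y ≠ 0) := by
  classical
  set h : ℝ[X] := g * C g.leadingCoeff⁻¹ with hh
  have hmon : h.Monic := monic_mul_leadingCoeff_inv hg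
  have hgh : g ∣ h := ⟨C g.leadingCoeff⁻¹, rfl⟩
  have hhg : h ∣ g := by
    refine ⟨C g.leadingCoeff, ?_⟩
    rw [hh, mul_assoc, ← C_mul, inv_mul_cancel₀ (leadingCoeff_ne_zero.mpr hg), C_1, mul_one]
  set n : ℕ := h.natDegree with hn
  set f : ℝ[X] → ℝ[X] → ℝ := fun p q => ((p * q) %ₘ h).coeff (n - 1) with hf
  have key : ∀ p q : ℝ[X], g ∣ p → f p q = 0 := by
    intro p q hp
    have hdvd : h ∣ p * q := Dvd.dvd.mul_right (hhg.trans hp) q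
    rw [hf]
    simp only [(modByMonic_eq_zero_iff_dvd hmon).mpr hdvd, coeff_zero]
  have hwd : ∀ p₁ q₁ p₂ q₂ : ℝ[X], Submodule.quotientRel (Submodule.span ℝ[X] {g}) p₁ p₂ →
      Submodule.quotientRel (Submodule.span ℝ[X] {g}) q₁ q₂ → f p₁ q₁ = f p₂ q₂ := by
    intro p₁ q₁ p₂ q₂ hp hq
    rw [Submodule.quotientRel_def] at hp hq
    obtain ⟨a, ha⟩ := Submodule.mem_span_singleton.mp hp
    obtain ⟨b, hb⟩ := Submodule.mem_span_singleton.mp hq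
    rw [smul_eq_mul] at ha hb
    have hp2 : p₁ = p₂ + a * g := by linear_combination -ha
    have hq2 : q₁ = q₂ + b * g := by linear_combination -hb
    have expand : p₁ * q₁ = p₂ * q₂ + (a * q₂ + p₂ * b + a * g * b) * g := by
      rw [hp2, hq2]; ring
    rw [hf]
    show ((p₁ * q₁) %ₘ h).coeff (n-1) = ((p₂ * q₂) %ₘ h).coeff (n-1)
    have : h ∣ (a * q₂ + p₂ * b + a * g * b) * g := Dvd.dvd.mul_left hhg _
    rw [expand, add_modByMonic, (modByMonic_eq_zero_iff_dvd hmon).mpr this, add_zero]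
  refine ⟨fun x y => Quotient.liftOn₂' x y f
    (fun a₁ a₂ b₁ b₂ h1 h2 => hwd _ _ _ _ h1 h2), ?_, ?_, ?_, ?_, ?_⟩
  · -- symmetry
    intro x y
    obtain ⟨p, rfl⟩ := Submodule.Quotient.mk_surjective _ x
    obtain ⟨q, rfl⟩ := Submodule.Quotient.mk_surjective _ y
    show f p q = f q p
    rw [hf]; simp only [mul_comm]
  · intro x x' y
    obtain ⟨p, rfl⟩ := Submodule.Quotient.mk_surjective _ x
    obtain ⟨p', rfl⟩ := Submodule.Quotient.mk_surjective _ x'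
    obtain ⟨q, rfl⟩ := Submodule.Quotient.mk_surjective _ y
    rw [← Submodule.Quotient.mk_add]
    show f (p + p') q = f p q + f p' q
    rw [hf]
    simp only [add_mul, add_modByMonic, coeff_add]
  · intro c x y
    obtain ⟨p, rfl⟩ := Submodule.Quotient.mk_surjective _ x
    obtain ⟨q, rfl⟩ := Submodule.Quotient.mk_surjective _ y
    rw [← Submodule.Quotient.mk_smul, ← Submodule.Quotient.mk_smul]
    show f (c • p) q = f p (c • q)
    rw [hf]
    simp only [smul_eq_mul]
    ring_nf
  · intro c x y
    obtain ⟨p, rfl⟩ := Submodule.Quotient.mk_surjective _ x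
    obtain ⟨q, rfl⟩ := Submodule.Quotient.mk_surjective _ y
    rw [← Submodule.Quotient.mk_smul]
    show f (C c • p) q = c * f p q
    rw [hf]
    simp only [smul_eq_mul]
    have : C c * p * q = c • (p * q) := by rw [smul_eq_C_mul]; ring
    rw [this, smul_modByMonic, coeff_smul, smul_eq_mul]
  · -- nondegeneracy
    intro x hx
    obtain ⟨p, rfl⟩ := Submodule.Quotient.mk_surjective _ x
    set p' : ℝ[X] := p %ₘ h with hp'
    have hmkp : (Submodule.Quotient.mk p' : ℝ[X] ⧸ Submodule.span ℝ[X] {g})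
        = Submodule.Quotient.mk p := by
      rw [Submodule.Quotient.eq]
      rw [hp', modByMonic_eq_sub_mul_div _ h]
      refine Submodule.mem_span_singleton.mpr ⟨-(C g.leadingCoeff⁻¹ * (p /ₘ h)), ?_⟩
      rw [smul_eq_mul, hh]; ring
    have hp'0 : p' ≠ 0 := by
      intro h0
      apply hx
      rw [← hmkp, h0, Submodule.Quotient.mk_eq_zero]
      exact Submodule.zero_mem _
    have hdeg : p'.degree < h.degree := degree_modByMonic_lt p hmon
    set k : ℕ := p'.natDegree with hk
    have hkn : k < n := natDegree_lt_natDegree hp'0 hdeg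
    have hn0 : 0 < n := Nat.pos_of_ne_zero (by omega)
    refine ⟨Submodule.Quotient.mk (X ^ (n - 1 - k)), ?_⟩
    rw [← hmkp]
    show ((p' * X ^ (n - 1 - k)) %ₘ h).coeff (n - 1) ≠ 0
    have hdeg2 : (p' * X ^ (n - 1 - k)).degree < h.degree := by
      rw [degree_eq_natDegree (mul_ne_zero hp'0 (pow_ne_zero _ X_ne_zero)),
        degree_eq_natDegree hmon.ne_zero]
      rw [natDegree_mul hp'0 (pow_ne_zero _ X_ne_zero), natDegree_X_pow]
      exact_mod_cast by omega
    rw [(modByMonic_eq_self_iff hmon).mpr hdeg2]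
    have hsum : k + (n - 1 - k) = n - 1 := by omega
    have := coeff_mul_X_pow p' (n - 1 - k) k
    rw [hsum] at this
    rw [this]
    exact mt leadingCoeff_eq_zero.mp hp'0

open Polynomial in
theorem exists_sym_intertwiner {m : ℕ} (E : Matrix (Fin m) (Fin m) ℝ) :
    ∃ s : Matrix (Fin m) (Fin m) ℝ, sᵀ = s ∧ IsUnit s.det ∧ E * s = s * Eᵀ := by
  classical
  set φ : (Fin m → ℝ) →ₗ[ℝ] (Fin m → ℝ) := Matrix.mulVecLin E with hφ
  set o := Module.AEval'.of φ with ho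
  have tors : Module.IsTorsion ℝ[X] (Module.AEval' φ) := by
    intro z
    refine ⟨⟨φ.charpoly, mem_nonZeroDivisors_of_ne_zero φ.charpoly_monic.ne_zero⟩, ?_⟩
    show φ.charpoly • z = 0
    apply o.symm.injective
    rw [Module.AEval.of_symm_smul, LinearMap.aeval_self_charpoly]
    simp
  obtain ⟨ι, fι, pp, hirr, e, ⟨ψ⟩⟩ := Module.equiv_directSum_of_isTorsion tors
  haveI := fι
  have hg0 : ∀ i, pp i ^ e i ≠ 0 := fun i => pow_ne_zero _ (hirr i).ne_zero
  choose β hsym hadd hsmul hC hnd using fun i => pairing_exists (pp i ^ e i) (hg0 i)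
  set B : (Fin m → ℝ) → (Fin m → ℝ) → ℝ :=
    fun x y => ∑ i, β i (ψ (o x) i) (ψ (o y) i) with hB
  have hβ0 : ∀ i u, β i u 0 = 0 := by
    intro i u
    have := hadd i 0 0 u
    rw [add_zero] at this
    have h2 : β i 0 u = 0 := by linarith
    rw [hsym]; exact h2
  have Bsym : ∀ x y, B x y = B y x := by
    intro x y; exact Finset.sum_congr rfl fun i _ => hsym i _ _
  have Badd : ∀ x x' y, B (x + x') y = B x y + B x' y := by
    intro x x' y
    rw [hB, ← Finset.sum_add_distrib]
    refine Finset.sum_congr rfl fun i _ => ?_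
    rw [map_add, map_add, DirectSum.add_apply, hadd]
  have Bsmul : ∀ (c : ℝ) x y, B (c • x) y = c * B x y := by
    intro c x y
    rw [hB, Finset.mul_sum]
    refine Finset.sum_congr rfl fun i _ => ?_
    have h1 : o (c • x) = (C c : ℝ[X]) • o x := by
      rw [_root_.map_smul, Module.AEval.C_smul]
    rw [h1, _root_.map_smul, DirectSum.smul_apply, hC]
  have BE : ∀ x y, B (E *ᵥ x) y = B x (E *ᵥ y) := by
    intro x y
    refine Finset.sum_congr rfl fun i _ => ?_
    have h1 : ∀ z, o (E *ᵥ z) = (X : ℝ[X]) • o z := fun z =>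
      (Module.AEval'.X_smul_of φ z).symm
    rw [h1, h1, _root_.map_smul, _root_.map_smul, DirectSum.smul_apply, DirectSum.smul_apply, hsmul]
  have Bnd : ∀ x, x ≠ 0 → ∃ y, B x y ≠ 0 := by
    intro x hx
    have hox : ψ (o x) ≠ 0 := by
      intro hc
      apply hx
      have : o x = 0 := by
        apply ψ.injective; rw [hc, map_zero]
      exact o.injective (by rw [this, map_zero])
    have hex : ∃ i, ψ (o x) i ≠ 0 := by
      by_contra hc
      push_neg at hc
      exact hox (DFinsupp.ext hc)
    obtain ⟨i, hi⟩ := hex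
    obtain ⟨z, hz⟩ := hnd i _ hi
    refine ⟨o.symm (ψ.symm (DirectSum.of _ i z)), ?_⟩
    have hoy : ψ (o (o.symm (ψ.symm (DirectSum.of _ i z)))) = DirectSum.of _ i z := by
      rw [o.apply_symm_apply, ψ.apply_symm_apply]
    rw [hB]
    simp only [hoy]
    rw [Finset.sum_eq_single i]
    · rw [DirectSum.of_eq_same]; exact hz
    · intro j _ hj
      rw [DirectSum.of_eq_of_ne _ _ _ hj, hβ0]
    · intro hmem; exact absurd (Finset.mem_univ i) hmem
  -- Gram matrix
  set sing : Fin m → (Fin m → ℝ) := fun k => Pi.single k 1 with hsing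
  set s' : Matrix (Fin m) (Fin m) ℝ :=
    Matrix.of (fun i j => B (sing i) (sing j)) with hs'
  have B0 : ∀ y, B 0 y = 0 := by
    intro y
    have := Badd 0 0 y
    rw [add_zero] at this; linarith
  have Bsum : ∀ (c : Fin m → ℝ) (u : Fin m → (Fin m → ℝ)) (y : Fin m → ℝ),
      B (∑ k, c k • u k) y = ∑ k, c k * B (u k) y := by
    intro c u y
    induction (Finset.univ : Finset (Fin m)) using Finset.induction_on with
    | empty => simpa using B0 y
    | insert _ _ hnotmem ih =>
        rw [Finset.sum_insert hnotmem, Finset.sum_insert hnotmem, Badd, Bsmul, ih]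
  have hexpand : ∀ x : Fin m → ℝ, x = ∑ k, x k • sing k := by
    intro x
    conv_lhs => rw [← Finset.univ_sum_single x]
    refine Finset.sum_congr rfl fun k _ => ?_
    rw [hsing]
    rw [← Pi.single_smul, smul_eq_mul, mul_one]
  have hBs : ∀ x y, B x y = x ⬝ᵥ (s' *ᵥ y) := by
    intro x y
    conv_lhs => rw [hexpand x, Bsum]
    refine Finset.sum_congr rfl fun k _ => ?_
    congr 1
    rw [Bsym]
    conv_lhs => rw [hexpand y, Bsum]
    rw [Matrix.mulVec]
    rw [dotProduct]
    refine Finset.sum_congr rfl fun j _ => ?_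
    rw [Bsym]
    rw [mul_comm]
    rfl
  have hmv : ∀ (M : Matrix (Fin m) (Fin m) ℝ) (j : Fin m),
      M *ᵥ sing j = fun i => M i j := by
    intro M j
    funext i
    rw [hsing]
    rw [Matrix.mulVec_single]
    simp
  have hdotsingle : ∀ (i : Fin m) (v : Fin m → ℝ), sing i ⬝ᵥ v = v i := by
    intro i v
    rw [hsing, dotProduct]
    rw [Finset.sum_eq_single i] <;> simp +contextual [Pi.single_apply]
  have hEs : Eᵀ * s' = s' * E := by
    ext i j
    have h1 := BE (sing i) (sing j)
    rw [hBs, hBs] at h1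
    rw [hmv E j] at h1
    rw [hdotsingle] at h1
    calc (Eᵀ * s') i j = (E *ᵥ Pi.single i 1) ⬝ᵥ (s' *ᵥ Pi.single j 1) := by
          rw [hmv E i, hmv s' j, Matrix.mul_apply, dotProduct]
          refine Finset.sum_congr rfl fun k _ => ?_
          rw [Matrix.transpose_apply]
        _ = (s' *ᵥ fun i => E i j) i := h1
        _ = (s' * E) i j := by
          rw [Matrix.mul_apply, Matrix.mulVec, dotProduct]
  have hs'sym : s'ᵀ = s' := by
    ext i j
    rw [Matrix.transpose_apply]
    exact Bsym _ _
  have hs'det : IsUnit s'.det := by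
    rw [isUnit_iff_ne_zero]
    intro hdet
    obtain ⟨v, hv0, hv⟩ := Matrix.exists_mulVec_eq_zero_iff.mpr hdet
    obtain ⟨y, hy⟩ := Bnd v hv0
    apply hy
    rw [Bsym, hBs, hv, dotProduct_zero]
  refine ⟨s'⁻¹, ?_, ?_, ?_⟩
  · rw [Matrix.transpose_nonsing_inv, hs'sym]
  · exact Matrix.isUnit_nonsing_inv_det _ hs'det
  · have hinv1 : s'⁻¹ * s' = 1 := Matrix.nonsing_inv_mul _ hs'det
    have hinv2 : s' * s'⁻¹ = 1 := Matrix.mul_nonsing_inv _ hs'det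
    calc E * s'⁻¹ = s'⁻¹ * (s' * E) * s'⁻¹ := by
          rw [show s'⁻¹ * (s' * E) = s'⁻¹ * s' * E from (mul_assoc _ _ _).symm, hinv1, one_mul]
      _ = s'⁻¹ * (Eᵀ * s') * s'⁻¹ := by rw [hEs]
      _ = s'⁻¹ * Eᵀ := by
          rw [show s'⁻¹ * (Eᵀ * s') * s'⁻¹ = s'⁻¹ * Eᵀ * (s' * s'⁻¹) from by
            rw [mul_assoc, mul_assoc, mul_assoc], hinv2, mul_one]

/-- The standard symplectic matrix `J = [[0, I], [-I, 0]]` of size `2d`. -/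
def Jmat (d : ℕ) : Matrix (Fin d ⊕ Fin d) (Fin d ⊕ Fin d) ℝ :=
  Matrix.fromBlocks 0 1 (-1) 0

section Blocks
variable {d : ℕ}

private def Umat (S : Matrix (Fin d) (Fin d) ℝ) : Matrix (Fin d ⊕ Fin d) (Fin d ⊕ Fin d) ℝ :=
  Matrix.fromBlocks 1 S 0 1

private def Lmat (S : Matrix (Fin d) (Fin d) ℝ) : Matrix (Fin d ⊕ Fin d) (Fin d ⊕ Fin d) ℝ :=
  Matrix.fromBlocks 1 0 S 1

private lemma Umat_mul_Umat (a b : Matrix (Fin d) (Fin d) ℝ) :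
    Umat a * Umat b = Umat (a + b) := by
  simp [Umat, Matrix.fromBlocks_multiply, add_comm]

private lemma Lmat_mul_Lmat (a b : Matrix (Fin d) (Fin d) ℝ) :
    Lmat a * Lmat b = Lmat (a + b) := by
  simp [Lmat, Matrix.fromBlocks_multiply, add_comm]

private lemma Umat_zero : Umat (0 : Matrix (Fin d) (Fin d) ℝ) = 1 := by
  simp [Umat, ← Matrix.fromBlocks_one]

private lemma Lmat_zero : Lmat (0 : Matrix (Fin d) (Fin d) ℝ) = 1 := by
  simp [Lmat, ← Matrix.fromBlocks_one]

private lemma J_mul_J : Jmat d * Jmat d = -1 := by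
  have : (-1 : Matrix (Fin d ⊕ Fin d) (Fin d ⊕ Fin d) ℝ) = fromBlocks (-1) 0 0 (-1) := by
    rw [← Matrix.fromBlocks_one, Matrix.fromBlocks_neg, neg_zero]
  rw [this]
  simp [Jmat, Matrix.fromBlocks_multiply]

private lemma isUnit_J_det : IsUnit (Jmat d).det := by
  have h : Jmat d * (-(Jmat d)) = 1 := by
    rw [Matrix.mul_neg, J_mul_J, neg_neg]
  have := congrArg Matrix.det h
  rw [Matrix.det_mul, Matrix.det_one] at this
  exact IsUnit.of_mul_eq_one _ this

private lemma symp_mul {M N : Matrix (Fin d ⊕ Fin d) (Fin d ⊕ Fin d) ℝ}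
    (hM : Mᵀ * Jmat d * M = Jmat d) (hN : Nᵀ * Jmat d * N = Jmat d) :
    (M * N)ᵀ * Jmat d * (M * N) = Jmat d := by
  rw [Matrix.transpose_mul]
  calc Nᵀ * Mᵀ * Jmat d * (M * N) = Nᵀ * (Mᵀ * Jmat d * M) * N := by
        simp only [Matrix.mul_assoc]
    _ = Jmat d := by rw [hM]; exact hN

private lemma symp_Umat {S : Matrix (Fin d) (Fin d) ℝ} (hS : Sᵀ = S) :
    (Umat S)ᵀ * Jmat d * Umat S = Jmat d := by
  simp [Umat, Jmat, Matrix.fromBlocks_transpose, Matrix.fromBlocks_multiply, hS]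

private lemma symp_Lmat {S : Matrix (Fin d) (Fin d) ℝ} (hS : Sᵀ = S) :
    (Lmat S)ᵀ * Jmat d * Lmat S = Jmat d := by
  simp [Lmat, Jmat, Matrix.fromBlocks_transpose, Matrix.fromBlocks_multiply, hS]

end Blocks


private lemma exists_pencil_invertible {d : ℕ} (C D : Matrix (Fin d) (Fin d) ℝ)
    (hCD : C * Dᵀ = D * Cᵀ)
    (hker : ∀ x : Fin d → ℝ, Cᵀ *ᵥ x = 0 → Dᵀ *ᵥ x = 0 → x = 0) :
    ∃ lam : ℝ, IsUnit (lam • C + D).det := by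
  classical
  by_contra hc
  push_neg at hc
  have hx : ∀ i : Fin (d+1), ∃ x : Fin d → ℝ, x ≠ 0 ∧ ((i.1 : ℝ) • C + D)ᵀ *ᵥ x = 0 := by
    intro i
    have hdet : (((i.1 : ℝ) • C + D)ᵀ).det = 0 := by
      rw [Matrix.det_transpose]
      by_contra hne
      exact hc _ (isUnit_iff_ne_zero.mpr hne)
    obtain ⟨v, hv0, hv⟩ := Matrix.exists_mulVec_eq_zero_iff.mpr hdet
    exact ⟨v, hv0, hv⟩
  choose x hx0 hxeq using hx
  set v : Fin (d+1) → (Fin d → ℝ) := fun i => Cᵀ *ᵥ (x i) with hv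
  have hmix : ∀ i : Fin (d+1), (i.1 : ℝ) • (Cᵀ *ᵥ x i) + Dᵀ *ᵥ x i = 0 := by
    intro i
    have h := hxeq i
    rwa [Matrix.transpose_add, Matrix.transpose_smul, Matrix.add_mulVec,
      Matrix.smul_mulVec] at h
  have hvne : ∀ i, v i ≠ 0 := by
    intro i h0
    apply hx0 i
    apply hker
    · exact h0
    · have h := hmix i
      have h0' : Cᵀ *ᵥ x i = 0 := h0
      rw [h0', smul_zero, zero_add] at h
      exact h
  -- pairwise orthogonality
  have key : ∀ a b : Fin d → ℝ, (Dᵀ *ᵥ a) ⬝ᵥ (Cᵀ *ᵥ b) = (Cᵀ *ᵥ a) ⬝ᵥ (Dᵀ *ᵥ b) := by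
    intro a b
    rw [Matrix.dotProduct_mulVec, Matrix.vecMul_transpose, Matrix.mulVec_mulVec,
      Matrix.dotProduct_mulVec, Matrix.vecMul_transpose, Matrix.mulVec_mulVec, hCD]
  have horth : ∀ i j : Fin (d+1), i ≠ j → v i ⬝ᵥ v j = 0 := by
    intro i j hij
    have h1 : (0 : Fin d → ℝ) ⬝ᵥ v j = 0 := zero_dotProduct _
    rw [← hmix i, add_dotProduct, smul_dotProduct] at h1
    have h2 : v i ⬝ᵥ (0 : Fin d → ℝ) = 0 := dotProduct_zero _
    rw [← hmix j, dotProduct_add, dotProduct_smul] at h2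
    have h3 : (Dᵀ *ᵥ x i) ⬝ᵥ (Cᵀ *ᵥ x j) = (Cᵀ *ᵥ x i) ⬝ᵥ (Dᵀ *ᵥ x j) := key _ _
    have hvij : v i ⬝ᵥ v j = (Cᵀ *ᵥ x i) ⬝ᵥ (Cᵀ *ᵥ x j) := rfl
    have hne : (i.1 : ℝ) ≠ (j.1 : ℝ) := by
      intro hcast
      exact hij (Fin.val_injective (Nat.cast_injective hcast))
    have : ((i.1 : ℝ) - (j.1 : ℝ)) * (v i ⬝ᵥ v j) = 0 := by
      have e1 : (i.1 : ℝ) • (v i ⬝ᵥ v j) + (Dᵀ *ᵥ x i) ⬝ᵥ v j = 0 := h1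
      have e2 : (j.1 : ℝ) • (v i ⬝ᵥ v j) + v i ⬝ᵥ (Dᵀ *ᵥ x j) = 0 := h2
      have e3 : (Dᵀ *ᵥ x i) ⬝ᵥ v j = v i ⬝ᵥ (Dᵀ *ᵥ x j) := h3
      rw [smul_eq_mul] at e1 e2
      rw [e3] at e1
      nlinarith [e1, e2]
    rcases mul_eq_zero.mp this with h | h
    · exact absurd (by linarith : (i.1:ℝ) = (j.1:ℝ)) hne
    · exact h
  -- linear independence
  have li : LinearIndependent ℝ v := by
    rw [Fintype.linearIndependent_iff]
    intro g hg j
    have hdot := congrArg (fun w => w ⬝ᵥ v j) hg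
    simp only [zero_dotProduct] at hdot
    rw [show (∑ i, g i • v i) ⬝ᵥ v j = ∑ i, g i * (v i ⬝ᵥ v j) from by
      rw [dotProduct]
      simp only [Finset.sum_apply, Pi.smul_apply, smul_eq_mul, Finset.sum_mul]
      rw [Finset.sum_comm]
      simp only [dotProduct, Finset.mul_sum, mul_assoc]] at hdot
    rw [Finset.sum_eq_single j (fun i _ hij => by rw [horth i j hij, mul_zero])
      (fun hmem => absurd (Finset.mem_univ j) hmem)] at hdot
    rcases mul_eq_zero.mp hdot with h | h
    · exact h
    · exact absurd (dotProduct_self_eq_zero.mp h) (hvne j)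
  have hcard := li.fintype_card_le_finrank
  rw [Module.finrank_fintype_fun_eq_card] at hcard
  simp [Fintype.card_fin] at hcard


private lemma fromBlocks_congr {d : ℕ} {X X' Y Y' Z Z' W W' : Matrix (Fin d) (Fin d) ℝ}
    (h1 : X = X') (h2 : Y = Y') (h3 : Z = Z') (h4 : W = W') :
    Matrix.fromBlocks X Y Z W = Matrix.fromBlocks X' Y' Z' W' := by rw [h1, h2, h3, h4]

/-- **Unit triangular factorization of the matrix symplectic group (SP = L₉).**
Every real `2d × 2d` symplectic matrix `H` (i.e. `Hᵀ J H = J`) is a product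
`P₉ P₈ ⋯ P₂ P₁` where `Pᵢ = [[I, Sᵢ],[0, I]]` for odd `i` and
`Pᵢ = [[I, 0],[Sᵢ, I]]` for even `i`, with each `Sᵢ` symmetric.
(Here `S i` for `i : Fin 9` plays the role of `S_{i+1}`.) -/
theorem unit_triangular_factorization (d : ℕ)
    (H : Matrix (Fin d ⊕ Fin d) (Fin d ⊕ Fin d) ℝ)
    (hH : Hᵀ * Jmat d * H = Jmat d) :
    ∃ S : Fin 9 → Matrix (Fin d) (Fin d) ℝ, (∀ i, (S i)ᵀ = S i) ∧
      H = Matrix.fromBlocks 1 (S 8) 0 1 * Matrix.fromBlocks 1 0 (S 7) 1 *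
          Matrix.fromBlocks 1 (S 6) 0 1 * Matrix.fromBlocks 1 0 (S 5) 1 *
          Matrix.fromBlocks 1 (S 4) 0 1 * Matrix.fromBlocks 1 0 (S 3) 1 *
          Matrix.fromBlocks 1 (S 2) 0 1 * Matrix.fromBlocks 1 0 (S 1) 1 *
          Matrix.fromBlocks 1 (S 0) 0 1 := by
  classical
  -- H is invertible
  have hJd : IsUnit (Jmat d).det := isUnit_J_det
  have hdetH : IsUnit H.det := by
    have h1 := congrArg Matrix.det hH
    rw [Matrix.det_mul, Matrix.det_mul, Matrix.det_transpose] at h1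
    have hc : H.det * H.det = 1 := by
      have hJne : (Jmat d).det ≠ 0 := hJd.ne_zero
      apply mul_right_cancel₀ hJne
      rw [one_mul]
      linear_combination h1
    exact IsUnit.of_mul_eq_one _ hc
  -- row form of symplecticity
  have hrow : H * Jmat d * Hᵀ = Jmat d := by
    have hleft : ((-(Jmat d)) * Hᵀ * Jmat d) * H = 1 := by
      calc ((-(Jmat d)) * Hᵀ * Jmat d) * H = (-(Jmat d)) * (Hᵀ * Jmat d * H) := by
            simp only [Matrix.mul_assoc]
        _ = 1 := by rw [hH, Matrix.neg_mul, J_mul_J, neg_neg]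
    have hright : H * ((-(Jmat d)) * Hᵀ * Jmat d) = 1 := mul_eq_one_comm.mp hleft
    have h3 : H * (-(Jmat d)) * Hᵀ * Jmat d = 1 := by
      rw [Matrix.mul_assoc, Matrix.mul_assoc, ← Matrix.mul_assoc (-(Jmat d))]
      exact hright
    have hJJ' : Jmat d * -Jmat d = 1 := by rw [Matrix.mul_neg, J_mul_J, neg_neg]
    have h7 : H * -Jmat d * Hᵀ = -Jmat d := by
      calc H * -Jmat d * Hᵀ = ((H * -Jmat d * Hᵀ) * Jmat d) * -Jmat d := by
            rw [Matrix.mul_assoc (H * -Jmat d * Hᵀ) (Jmat d) (-Jmat d), hJJ', Matrix.mul_one]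
        _ = -Jmat d := by rw [h3, Matrix.one_mul]
    have h8 : H * Jmat d * Hᵀ = -(H * -Jmat d * Hᵀ) := by
      rw [Matrix.mul_neg, Matrix.neg_mul, neg_neg]
    rw [h8, h7, neg_neg]
  -- blocks of H
  set A := H.toBlocks₁₁ with hA
  set B := H.toBlocks₁₂ with hB
  set C := H.toBlocks₂₁ with hC
  set DD := H.toBlocks₂₂ with hDD
  have hHb : H = fromBlocks A B C DD := (fromBlocks_toBlocks H).symm
  have hCD : C * DDᵀ = DD * Cᵀ := by
    have h := hrow
    rw [hHb, show Jmat d = fromBlocks 0 1 (-1) 0 from rfl, Matrix.fromBlocks_transpose,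
      Matrix.fromBlocks_multiply, Matrix.fromBlocks_multiply] at h
    have h22 := congrArg Matrix.toBlocks₂₂ h
    simp only [Matrix.toBlocks_fromBlocks₂₂, Matrix.mul_zero, Matrix.mul_one, Matrix.mul_neg,
      zero_add, add_zero, Matrix.neg_mul] at h22
    rw [neg_add_eq_sub] at h22
    exact sub_eq_zero.mp h22
  have hker : ∀ x : Fin d → ℝ, Cᵀ *ᵥ x = 0 → DDᵀ *ᵥ x = 0 → x = 0 := by
    intro x hCx hDx
    have hdetHT : IsUnit Hᵀ.det := by rwa [Matrix.det_transpose]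
    have hw : Hᵀ *ᵥ (Sum.elim 0 x) = 0 := by
      rw [hHb, Matrix.fromBlocks_transpose, Matrix.fromBlocks_mulVec]
      rw [Sum.elim_comp_inl, Sum.elim_comp_inr, hCx, hDx, Matrix.mulVec_zero, Matrix.mulVec_zero]
      funext i
      cases i <;> simp
    have hz : Sum.elim (0 : Fin d → ℝ) x = 0 := by
      have h2 := congrArg (fun w => (Hᵀ)⁻¹ *ᵥ w) hw
      simp only [Matrix.mulVec_mulVec] at h2
      rwa [Matrix.nonsing_inv_mul _ hdetHT, Matrix.one_mulVec, Matrix.mulVec_zero] at h2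
    funext j
    exact congrFun hz (Sum.inr j)
  obtain ⟨lam, hEdet⟩ := exists_pencil_invertible C DD hCD hker
  set E := lam • C + DD with hE
  obtain ⟨s, hssym, hsdet, hsE⟩ := exists_sym_intertwiner E
  have hEi1 : E * E⁻¹ = 1 := Matrix.mul_nonsing_inv _ hEdet
  have hEi2 : E⁻¹ * E = 1 := Matrix.nonsing_inv_mul _ hEdet
  have hsi1 : s * s⁻¹ = 1 := Matrix.mul_nonsing_inv _ hsdet
  have hsi2 : s⁻¹ * s = 1 := Matrix.nonsing_inv_mul _ hsdet
  have hECE : E * Cᵀ = C * Eᵀ := by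
    rw [hE, Matrix.transpose_add, Matrix.transpose_smul, Matrix.add_mul, Matrix.mul_add,
      Matrix.smul_mul, Matrix.mul_smul, hCD]
  have hECsym : (E⁻¹ * C)ᵀ = E⁻¹ * C := by
    have hdetET : IsUnit Eᵀ.det := by rwa [Matrix.det_transpose]
    have hETi : Eᵀ * (Eᵀ)⁻¹ = 1 := Matrix.mul_nonsing_inv _ hdetET
    rw [Matrix.transpose_mul, Matrix.transpose_nonsing_inv]
    calc Cᵀ * (Eᵀ)⁻¹ = E⁻¹ * (E * Cᵀ) * (Eᵀ)⁻¹ := by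
          rw [← Matrix.mul_assoc, hEi2, Matrix.one_mul]
      _ = E⁻¹ * (C * Eᵀ) * (Eᵀ)⁻¹ := by rw [hECE]
      _ = E⁻¹ * C := by
          simp only [Matrix.mul_assoc]
          rw [hETi, Matrix.mul_one]
  -- the three first moves
  set t1 : Matrix (Fin d) (Fin d) ℝ := lam • (1 : Matrix (Fin d) (Fin d) ℝ) with ht1
  set t2 : Matrix (Fin d) (Fin d) ℝ := s - E⁻¹ * C with ht2
  set t3 : Matrix (Fin d) (Fin d) ℝ := 1 - s⁻¹ with ht3
  have ht1sym : t1ᵀ = t1 := by rw [ht1, Matrix.transpose_smul, Matrix.transpose_one]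
  have ht2sym : t2ᵀ = t2 := by rw [ht2, Matrix.transpose_sub, hssym, hECsym]
  have ht3sym : t3ᵀ = t3 := by
    rw [ht3, Matrix.transpose_sub, Matrix.transpose_one, Matrix.transpose_nonsing_inv, hssym]
  have hsm : ∀ M : Matrix (Fin d) (Fin d) ℝ, M * t1 = lam • M := by
    intro M; rw [ht1, Matrix.mul_smul, Matrix.mul_one]
  set B1 := lam • A + B with hB1
  set P := A + B1 * t2 with hP
  set R := E * s with hR
  set Q' := P * t3 + B1 with hQ'
  have step1 : H * Umat t1 = fromBlocks A B1 C E := by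
    rw [hHb, Umat, Matrix.fromBlocks_multiply]
    exact fromBlocks_congr (by rw [Matrix.mul_one, Matrix.mul_zero, add_zero])
      (by rw [hsm A, Matrix.mul_one, hB1])
      (by rw [Matrix.mul_one, Matrix.mul_zero, add_zero])
      (by rw [hsm C, Matrix.mul_one, hE])
  have step2 : fromBlocks A B1 C E * Lmat t2 = fromBlocks P B1 R E := by
    rw [Lmat, Matrix.fromBlocks_multiply]
    refine fromBlocks_congr (by rw [Matrix.mul_one, hP]) (by rw [Matrix.mul_zero, Matrix.mul_one, zero_add])
      ?_ (by rw [Matrix.mul_zero, Matrix.mul_one, zero_add])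
    -- C * 1 + E * t2 = R
    rw [Matrix.mul_one, ht2, Matrix.mul_sub, ← Matrix.mul_assoc, hEi1, Matrix.one_mul, hR]
    abel
  have step3 : fromBlocks P B1 R E * Umat t3 = fromBlocks P Q' R R := by
    rw [Umat, Matrix.fromBlocks_multiply]
    refine fromBlocks_congr (by rw [Matrix.mul_one, Matrix.mul_zero, add_zero])
      (by rw [Matrix.mul_one, hQ']) (by rw [Matrix.mul_one, Matrix.mul_zero, add_zero]) ?_
    -- R * t3 + E * 1 = R
    rw [Matrix.mul_one, ht3, Matrix.mul_sub, Matrix.mul_one, hR, Matrix.mul_assoc, hsi1,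
      Matrix.mul_one]
    abel
  set K := H * Umat t1 * Lmat t2 * Umat t3 with hKset
  have hKdef : K = fromBlocks P Q' R R := by
    rw [hKset, step1, step2, step3]
  have hKsymp : Kᵀ * Jmat d * K = Jmat d :=
    symp_mul (symp_mul (symp_mul hH (symp_Umat ht1sym)) (symp_Lmat ht2sym)) (symp_Umat ht3sym)
  have hRsym : Rᵀ = R := by rw [hR, Matrix.transpose_mul, hssym, ← hsE]
  have hRdet : IsUnit R.det := by rw [hR, Matrix.det_mul]; exact hEdet.mul hsdet
  have hRi1 : R * R⁻¹ = 1 := Matrix.mul_nonsing_inv _ hRdet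
  have hRi2 : R⁻¹ * R = 1 := Matrix.nonsing_inv_mul _ hRdet
  -- block identities from symplecticity of K
  have hKb := hKsymp
  rw [hKdef, show Jmat d = fromBlocks 0 1 (-1) 0 from rfl, Matrix.fromBlocks_transpose,
    Matrix.fromBlocks_multiply, Matrix.fromBlocks_multiply] at hKb
  have h11 := congrArg Matrix.toBlocks₁₁ hKb
  have h12 := congrArg Matrix.toBlocks₁₂ hKb
  simp only [Matrix.toBlocks_fromBlocks₁₁, Matrix.toBlocks_fromBlocks₁₂, Matrix.mul_zero,
    Matrix.mul_one, Matrix.mul_neg, zero_add, add_zero,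
    Matrix.neg_mul, Matrix.zero_mul, Matrix.one_mul] at h11 h12
  -- h11 : -(Rᵀ * P) + Pᵀ * R = 0 ; h12 : -(Rᵀ * Q') + Pᵀ * R = 1
  rw [hRsym, neg_add_eq_sub] at h11 h12
  have hPR2 : Pᵀ * R = R * P := (sub_eq_zero.mp h11)
  have hRQ : R * Q' = Pᵀ * R - 1 := by
    have := h12
    rw [sub_eq_iff_eq_add] at this
    rw [this]
    abel
  have hQval : Q' = P - R⁻¹ := by
    have h1 : R * Q' = R * (P - R⁻¹) := by
      rw [hRQ, Matrix.mul_sub, hRi1, hPR2]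
    have h2 := congrArg (fun M => R⁻¹ * M) h1
    simp only [← Matrix.mul_assoc, hRi2, Matrix.one_mul] at h2
    exact h2
  set a := P * R⁻¹ - R⁻¹ with ha
  set c := (1 : Matrix (Fin d) (Fin d) ℝ) - R⁻¹ with hc
  have haR : a * R = P - 1 := by
    rw [ha, Matrix.sub_mul, Matrix.mul_assoc, hRi2, Matrix.mul_one]
  have hP1 : (1 : Matrix (Fin d) (Fin d) ℝ) + a * R = P := by rw [haR]; abel
  have hULU : Umat a * Lmat R * Umat c = K := by
    rw [hKdef, Umat, Lmat, Umat, Matrix.fromBlocks_multiply, Matrix.fromBlocks_multiply]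
    refine fromBlocks_congr ?_ ?_ ?_ ?_
    · simp only [Matrix.one_mul, Matrix.mul_one, Matrix.mul_zero, Matrix.zero_mul, zero_add,
        add_zero]
      exact hP1
    · simp only [Matrix.one_mul, Matrix.mul_one, Matrix.mul_zero, Matrix.zero_mul, zero_add,
        add_zero]
      rw [hP1, hQval, hc, ha, Matrix.mul_sub, Matrix.mul_one]
      abel
    · simp only [Matrix.one_mul, Matrix.mul_one, Matrix.mul_zero, Matrix.zero_mul, zero_add,
        add_zero]
    · simp only [Matrix.one_mul, Matrix.mul_one, Matrix.mul_zero, Matrix.zero_mul, zero_add,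
        add_zero]
      rw [hc, Matrix.mul_sub, Matrix.mul_one, hRi1]
      abel
  have hRinvT : (R⁻¹)ᵀ = R⁻¹ := by rw [Matrix.transpose_nonsing_inv, hRsym]
  have hPRinv : R⁻¹ * Pᵀ = P * R⁻¹ := by
    calc R⁻¹ * Pᵀ = R⁻¹ * (Pᵀ * R) * R⁻¹ := by
          simp only [Matrix.mul_assoc]
          rw [hRi1, Matrix.mul_one]
      _ = R⁻¹ * (R * P) * R⁻¹ := by rw [hPR2]
      _ = P * R⁻¹ := by rw [← Matrix.mul_assoc, hRi2, Matrix.one_mul]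
  have hinv1 : K * Umat (-t3) = H * Umat t1 * Lmat t2 := by
    rw [hKset, Matrix.mul_assoc (H * Umat t1 * Lmat t2), Umat_mul_Umat, add_neg_cancel,
      Umat_zero, Matrix.mul_one]
  have hinv2 : H * Umat t1 * Lmat t2 * Lmat (-t2) = H * Umat t1 := by
    rw [Matrix.mul_assoc (H * Umat t1), Lmat_mul_Lmat, add_neg_cancel, Lmat_zero, Matrix.mul_one]
  have hinv3 : H * Umat t1 * Umat (-t1) = H := by
    rw [Matrix.mul_assoc, Umat_mul_Umat, add_neg_cancel, Umat_zero, Matrix.mul_one]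
  have hfinal : Umat a * Lmat R * Umat c * Umat (-t3) * Lmat (-t2) * Umat (-t1) = H := by
    rw [hULU, hinv1, hinv2, hinv3]
  refine ⟨![-t1, -t2, 0, 0, -t3, 0, c, R, a], ?_, ?_⟩
  · intro i
    fin_cases i
    · show (-t1)ᵀ = -t1
      rw [Matrix.transpose_neg, ht1sym]
    · show (-t2)ᵀ = -t2
      rw [Matrix.transpose_neg, ht2sym]
    · show (0 : Matrix (Fin d) (Fin d) ℝ)ᵀ = 0
      exact Matrix.transpose_zero
    · show (0 : Matrix (Fin d) (Fin d) ℝ)ᵀ = 0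
      exact Matrix.transpose_zero
    · show (-t3)ᵀ = -t3
      rw [Matrix.transpose_neg, ht3sym]
    · show (0 : Matrix (Fin d) (Fin d) ℝ)ᵀ = 0
      exact Matrix.transpose_zero
    · show cᵀ = c
      rw [hc, Matrix.transpose_sub, Matrix.transpose_one, hRinvT]
    · show Rᵀ = R
      exact hRsym
    · show aᵀ = a
      rw [ha, Matrix.transpose_sub, Matrix.transpose_mul, hRinvT, hPRinv]
  · show H =
      Umat a * Lmat R * Umat c * Lmat 0 * Umat (-t3) * Lmat 0 * Umat 0 * Lmat (-t2) * Umat (-t1)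
    rw [Lmat_zero, Umat_zero, Matrix.mul_one, Matrix.mul_one, Matrix.mul_one]
    exact hfinal.symm
end

section
/- Generating function criterion for symplecticity: let S : R^d x R^d -> R be a twice continuously differentiable function of (P, q), and let Phi : R^{2d} -> R^{2d} be a differentiable map sending (p, q) to (P, Q) such that for every (p, q), writing (P, Q) = Phi(p, q), the relations Q = (dS/dP)(P, q) and p = (dS/dq)(P, q) hold. Then Phi is symplectic: its Jacobian matrix satisfies (D Phi)^T J (D Phi) = J at every point. -/
open Matrix

noncomputable def jac (d : ℕ) (Φ : ((Fin d ⊕ Fin d) → ℝ) → ((Fin d ⊕ Fin d) → ℝ))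
    (x : (Fin d ⊕ Fin d) → ℝ) : Matrix (Fin d ⊕ Fin d) (Fin d ⊕ Fin d) ℝ :=
  Matrix.of fun i j => fderiv ℝ Φ x (Pi.single j 1) i

/-- **Generating function criterion for symplecticity.** Let `S(P, q)` be a `C²`
function and let `Φ : (p, q) ↦ (P, Q)` be a differentiable map such that for every
`(p, q)`, writing `(P, Q) = Φ(p, q)`, the relations `Qₐ = ∂S/∂Pₐ (P, q)` and
`pₐ = ∂S/∂qₐ (P, q)` hold. Then the Jacobian of `Φ` is everywhere symplectic.
(Points of `ℝ^{2d}` are indexed by `Fin d ⊕ Fin d`, with the `inl` components playing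
the role of `p` and the `inr` components the role of `q`.) -/
theorem generating_function_symplectic (d : ℕ)
    (S : ((Fin d) → ℝ) → ((Fin d) → ℝ) → ℝ)
    (hS : ContDiff ℝ 2 (fun Pq : ((Fin d) → ℝ) × ((Fin d) → ℝ) => S Pq.1 Pq.2))
    (Φ : ((Fin d ⊕ Fin d) → ℝ) → ((Fin d ⊕ Fin d) → ℝ))
    (hΦ : Differentiable ℝ Φ)
    (hQ : ∀ x : (Fin d ⊕ Fin d) → ℝ, ∀ a : Fin d,
      Φ x (Sum.inr a) =
        fderiv ℝ (fun P => S P (fun b => x (Sum.inr b)))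
          (fun b => Φ x (Sum.inl b)) (Pi.single a 1))
    (hp : ∀ x : (Fin d ⊕ Fin d) → ℝ, ∀ a : Fin d,
      x (Sum.inl a) =
        fderiv ℝ (fun q => S (fun b => Φ x (Sum.inl b)) q)
          (fun b => x (Sum.inr b)) (Pi.single a 1)) :
    ∀ x, (jac d Φ x)ᵀ * Jmat d * jac d Φ x = Jmat d := by
  classical
  set f : ((Fin d → ℝ) × (Fin d → ℝ)) → ℝ := fun Pq => S Pq.1 Pq.2 with hfdef
  have hfd : Differentiable ℝ f := hS.differentiable (by norm_num)
  have hf'cd : ContDiff ℝ 1 (fderiv ℝ f) := hS.fderiv_right (by norm_num)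
  have hf'd : Differentiable ℝ (fderiv ℝ f) := hf'cd.differentiable (by norm_num)
  set L1 : ((Fin d ⊕ Fin d) → ℝ) →L[ℝ] (Fin d → ℝ) :=
    ContinuousLinearMap.pi (fun b => ContinuousLinearMap.proj (Sum.inl b)) with hL1
  set L2 : ((Fin d ⊕ Fin d) → ℝ) →L[ℝ] (Fin d → ℝ) :=
    ContinuousLinearMap.pi (fun b => ContinuousLinearMap.proj (Sum.inr b)) with hL2
  set g : ((Fin d ⊕ Fin d) → ℝ) → (Fin d → ℝ) × (Fin d → ℝ) :=
    fun y => (L1 (Φ y), L2 y) with hg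
  have hgd : ∀ y, HasFDerivAt g ((L1.comp (fderiv ℝ Φ y)).prod L2) y := fun y =>
    HasFDerivAt.prodMk (L1.hasFDerivAt.comp y (hΦ y).hasFDerivAt) L2.hasFDerivAt
  have hQ2 : ∀ y a, Φ y (Sum.inr a) = fderiv ℝ f (g y) (Pi.single a 1, 0) := by
    intro y a
    have h1 : HasFDerivAt (fun P => S P (fun b => y (Sum.inr b)))
        ((fderiv ℝ f (g y)).comp (ContinuousLinearMap.inl ℝ _ _)) (fun b => Φ y (Sum.inl b)) := by
      exact (hfd (g y)).hasFDerivAt.comp (fun b => Φ y (Sum.inl b))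
        (hasFDerivAt_prodMk_left (𝕜 := ℝ) (fun b => Φ y (Sum.inl b)) (fun b => y (Sum.inr b)))
    rw [hQ y a, h1.fderiv]
    simp
  have hp2 : ∀ y a, y (Sum.inl a) = fderiv ℝ f (g y) (0, Pi.single a 1) := by
    intro y a
    have h1 : HasFDerivAt (fun q => S (fun b => Φ y (Sum.inl b)) q)
        ((fderiv ℝ f (g y)).comp (ContinuousLinearMap.inr ℝ _ _)) (fun b => y (Sum.inr b)) := by
      exact (hfd (g y)).hasFDerivAt.comp (fun b => y (Sum.inr b))
        (hasFDerivAt_prodMk_right (𝕜 := ℝ) (fun b => Φ y (Sum.inl b)) (fun b => y (Sum.inr b)))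
    rw [hp y a, h1.fderiv]
    simp
  intro x
  set DΦ := fderiv ℝ Φ x with hDΦ
  set G : ((Fin d ⊕ Fin d) → ℝ) →L[ℝ] (Fin d → ℝ) × (Fin d → ℝ) :=
    (L1.comp DΦ).prod L2 with hG
  set B := fderiv ℝ (fderiv ℝ f) (g x) with hB
  have hBsymm : ∀ v w, B v w = B w v :=
    second_derivative_symmetric (fun y => (hfd y).hasFDerivAt) (hf'd (g x)).hasFDerivAt
  have hmid : HasFDerivAt (fun y => fderiv ℝ f (g y)) (B.comp G) x :=
    (hf'd (g x)).hasFDerivAt.comp x (hgd x)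
  have key1 : ∀ (a : Fin d) v, DΦ v (Sum.inr a) = B (G v) (Pi.single a 1, 0) := by
    intro a v
    have hL : HasFDerivAt (fun y => Φ y (Sum.inr a))
        ((ContinuousLinearMap.proj (R := ℝ) (φ := fun _ : Fin d ⊕ Fin d => ℝ)
          (Sum.inr a)).comp DΦ) x := by
      exact (ContinuousLinearMap.proj (R := ℝ) (φ := fun _ : Fin d ⊕ Fin d => ℝ)
        (Sum.inr a)).hasFDerivAt.comp x (hΦ x).hasFDerivAt
    have hR : HasFDerivAt (fun y => fderiv ℝ f (g y) (Pi.single a 1, 0))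
        ((ContinuousLinearMap.apply ℝ ℝ
          ((Pi.single a 1 : Fin d → ℝ), (0 : Fin d → ℝ))).comp (B.comp G)) x := by
      exact (ContinuousLinearMap.apply ℝ ℝ
        ((Pi.single a 1 : Fin d → ℝ), (0 : Fin d → ℝ))).hasFDerivAt.comp x hmid
    have hfun : (fun y => Φ y (Sum.inr a)) = fun y => fderiv ℝ f (g y) (Pi.single a 1, 0) :=
      funext fun y => hQ2 y a
    have heq := (hfun ▸ hL).unique hR
    have h2 := congrFun (congrArg (fun (L : ((Fin d ⊕ Fin d) → ℝ) →L[ℝ] ℝ) => (L : _ → ℝ)) heq) v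
    simpa using h2
  have key2 : ∀ (a : Fin d) v, v (Sum.inl a) = B (G v) (0, Pi.single a 1) := by
    intro a v
    have hL : HasFDerivAt (fun y : (Fin d ⊕ Fin d) → ℝ => y (Sum.inl a))
        (ContinuousLinearMap.proj (R := ℝ) (φ := fun _ : Fin d ⊕ Fin d => ℝ) (Sum.inl a)) x := by
      exact (ContinuousLinearMap.proj (R := ℝ) (φ := fun _ : Fin d ⊕ Fin d => ℝ)
        (Sum.inl a)).hasFDerivAt
    have hR : HasFDerivAt (fun y => fderiv ℝ f (g y) (0, Pi.single a 1))
        ((ContinuousLinearMap.apply ℝ ℝ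
          ((0 : Fin d → ℝ), (Pi.single a 1 : Fin d → ℝ))).comp (B.comp G)) x := by
      exact (ContinuousLinearMap.apply ℝ ℝ
        ((0 : Fin d → ℝ), (Pi.single a 1 : Fin d → ℝ))).hasFDerivAt.comp x hmid
    have hfun : (fun y : (Fin d ⊕ Fin d) → ℝ => y (Sum.inl a))
        = fun y => fderiv ℝ f (g y) (0, Pi.single a 1) :=
      funext fun y => hp2 y a
    have heq := (hfun ▸ hL).unique hR
    have h2 := congrFun (congrArg (fun (L : ((Fin d ⊕ Fin d) → ℝ) →L[ℝ] ℝ) => (L : _ → ℝ)) heq) v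
    simpa using h2
  have hsplit1 : ∀ (z : (Fin d → ℝ) × (Fin d → ℝ)) (c : Fin d → ℝ),
      B z (c, 0) = ∑ a, c a * B z (Pi.single a 1, 0) := by
    intro z c
    have hc : ((c, 0) : (Fin d → ℝ) × (Fin d → ℝ))
        = ∑ a, c a • ((Pi.single a 1 : Fin d → ℝ), (0 : Fin d → ℝ)) := by
      rw [Prod.ext_iff]
      constructor
      · rw [Prod.fst_sum]
        funext j
        simp [Finset.sum_apply, Pi.single_apply]
      · rw [Prod.snd_sum]
        simp
    rw [hc, map_sum]
    refine Finset.sum_congr rfl fun a _ => ?_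
    rw [(B z).map_smul, smul_eq_mul]
  have hsplit2 : ∀ (z : (Fin d → ℝ) × (Fin d → ℝ)) (c : Fin d → ℝ),
      B z (0, c) = ∑ a, c a * B z (0, Pi.single a 1) := by
    intro z c
    have hc : ((0, c) : (Fin d → ℝ) × (Fin d → ℝ))
        = ∑ a, c a • ((0 : Fin d → ℝ), (Pi.single a 1 : Fin d → ℝ)) := by
      rw [Prod.ext_iff]
      constructor
      · rw [Prod.fst_sum]
        simp
      · rw [Prod.snd_sum]
        funext j
        simp [Finset.sum_apply, Pi.single_apply]
    rw [hc, map_sum]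
    refine Finset.sum_congr rfl fun a _ => ?_
    rw [(B z).map_smul, smul_eq_mul]
  have main : ∀ v w : (Fin d ⊕ Fin d) → ℝ,
      ((∑ a, DΦ v (Sum.inl a) * DΦ w (Sum.inr a))
        - ∑ a, DΦ v (Sum.inr a) * DΦ w (Sum.inl a))
      = (∑ a, v (Sum.inl a) * w (Sum.inr a)) - ∑ a, v (Sum.inr a) * w (Sum.inl a) := by
    intro v w
    have e1 : (∑ a, DΦ v (Sum.inl a) * DΦ w (Sum.inr a)) = B (G w) ((G v).1, 0) := by
      rw [hsplit1 (G w) (G v).1]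
      refine Finset.sum_congr rfl fun a _ => ?_
      rw [← key1 a w]
      rfl
    have e2 : (∑ a, DΦ v (Sum.inr a) * DΦ w (Sum.inl a)) = B (G v) ((G w).1, 0) := by
      rw [hsplit1 (G v) (G w).1]
      refine Finset.sum_congr rfl fun a _ => ?_
      rw [← key1 a v]
      exact mul_comm _ _
    have e3 : B (G w) ((G v).1, 0) = B (G w) (G v) - B (G w) (0, (G v).2) := by
      rw [eq_sub_iff_add_eq, ← map_add, Prod.mk_add_mk, add_zero, zero_add, Prod.mk.eta]
    have e4 : B (G v) ((G w).1, 0) = B (G v) (G w) - B (G v) (0, (G w).2) := by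
      rw [eq_sub_iff_add_eq, ← map_add, Prod.mk_add_mk, add_zero, zero_add, Prod.mk.eta]
    have e5 : B (G v) (0, (G w).2) = ∑ a, w (Sum.inr a) * v (Sum.inl a) := by
      rw [hsplit2 (G v) (G w).2]
      refine Finset.sum_congr rfl fun a _ => ?_
      rw [← key2 a v]
      rfl
    have e6 : B (G w) (0, (G v).2) = ∑ a, v (Sum.inr a) * w (Sum.inl a) := by
      rw [hsplit2 (G w) (G v).2]
      refine Finset.sum_congr rfl fun a _ => ?_
      rw [← key2 a w]
      rfl
    rw [e1, e2, e3, e4, hBsymm (G w) (G v), e5, e6]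
    have e7 : ∑ a, w (Sum.inr a) * v (Sum.inl a) = ∑ a, v (Sum.inl a) * w (Sum.inr a) :=
      Finset.sum_congr rfl fun a _ => mul_comm _ _
    rw [e7]
    ring
  -- matrix computation
  ext i j
  have expand : ((jac d Φ x)ᵀ * Jmat d * jac d Φ x) i j
      = (∑ a, DΦ (Pi.single i 1) (Sum.inl a) * DΦ (Pi.single j 1) (Sum.inr a))
        - ∑ a, DΦ (Pi.single i 1) (Sum.inr a) * DΦ (Pi.single j 1) (Sum.inl a) := by
    rw [Matrix.mul_assoc, Matrix.mul_apply]
    rw [Fintype.sum_sum_type]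
    have hJ1 : ∀ a : Fin d, (Jmat d * jac d Φ x) (Sum.inl a) j
        = DΦ (Pi.single j 1) (Sum.inr a) := by
      intro a
      rw [Matrix.mul_apply, Fintype.sum_sum_type]
      simp [Jmat, jac, Matrix.one_apply, ite_mul, one_mul, zero_mul,
        Finset.sum_ite_eq, hDΦ]
    have hJ2 : ∀ a : Fin d, (Jmat d * jac d Φ x) (Sum.inr a) j
        = -DΦ (Pi.single j 1) (Sum.inl a) := by
      intro a
      rw [Matrix.mul_apply, Fintype.sum_sum_type]
      simp [Jmat, jac, Matrix.one_apply, Matrix.neg_apply, neg_mul, ite_mul, one_mul,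
        zero_mul, Finset.sum_ite_eq, hDΦ]
    simp only [hJ1, hJ2, Matrix.transpose_apply]
    simp only [jac, Matrix.of_apply, hDΦ]
    rw [sub_eq_add_neg, ← Finset.sum_neg_distrib]
    congr 1
    refine Finset.sum_congr rfl fun a _ => ?_
    ring
  rw [expand, main]
  rcases i with a | a <;> rcases j with b | b <;>
    simp [Jmat, Pi.single_apply, Finset.sum_ite_eq, Matrix.one_apply, eq_comm]
end

section
/- Symplecticity is preserved along the variational equation of a Hamiltonian system: let A : R -> R^{2d x 2d} be a map with A(t) symmetric for every t, and let Psi : R -> R^{2d x 2d} be differentiable with Psi'(t) = J^{-1} A(t) Psi(t) for all t and Psi(0)^T J Psi(0) = J. Then Psi(t)^T J Psi(t) = J for all t; i.e., Psi(t) is a symplectic matrix for every t. (This is the core of Poincare's theorem that the phase flow of a Hamiltonian system dy/dt = J^{-1} grad H(y) is a symplectic map, where A(t) is the Hessian of H along the solution and Psi(t) is the Jacobian of the flow with respect to the initial value.) -/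
open Matrix

lemma Jmat_mul_Jmat (d : ℕ) : Jmat d * Jmat d = -1 := by
  have h1 : (-1 : Matrix (Fin d ⊕ Fin d) (Fin d ⊕ Fin d) ℝ)
      = Matrix.fromBlocks (-1) 0 0 (-1) := by
    rw [← Matrix.fromBlocks_one]
    ext i j
    rcases i with i | i <;> rcases j with j | j <;> simp [Matrix.one_apply]
  rw [h1]
  simp [Jmat, Matrix.fromBlocks_multiply]

lemma Jmat_transpose (d : ℕ) : (Jmat d)ᵀ = -(Jmat d) := by
  simp [Jmat, Matrix.fromBlocks_transpose, Matrix.fromBlocks_neg]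

lemma Jmat_inv (d : ℕ) : (Jmat d)⁻¹ = -(Jmat d) := by
  apply inv_eq_right_inv
  rw [mul_neg, Jmat_mul_Jmat]; simp

lemma key_cancel (d : ℕ) (A P : Matrix (Fin d ⊕ Fin d) (Fin d ⊕ Fin d) ℝ)
    (hA : Aᵀ = A) :
    ((Jmat d)⁻¹ * A * P)ᵀ * Jmat d * P + Pᵀ * Jmat d * ((Jmat d)⁻¹ * A * P) = 0 := by
  rw [Jmat_inv]
  have h1 : ((-Jmat d) * A * P)ᵀ = Pᵀ * A * Jmat d := by
    rw [Matrix.transpose_mul, Matrix.transpose_mul, Matrix.transpose_neg,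
      Jmat_transpose, neg_neg, hA, ← Matrix.mul_assoc]
  rw [h1]
  simp only [Matrix.mul_assoc, Matrix.neg_mul, Matrix.mul_neg]
  rw [← Matrix.mul_assoc (Jmat d) (Jmat d) P,
    ← Matrix.mul_assoc (Jmat d) (Jmat d) (A * P), Jmat_mul_Jmat]
  simp [Matrix.mul_assoc]

/-- **Symplecticity is preserved along the variational equation of a Hamiltonian
system.** If `A(t)` is symmetric for every `t`, `Ψ : ℝ → ℝ^{2d×2d}` satisfies
`Ψ'(t) = J⁻¹ A(t) Ψ(t)` (entrywise) for all `t`, and `Ψ(0)ᵀ J Ψ(0) = J`, then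
`Ψ(t)ᵀ J Ψ(t) = J` for all `t`, i.e. `Ψ(t)` is symplectic for every `t`. -/
theorem variational_equation_symplectic (d : ℕ)
    (A : ℝ → Matrix (Fin d ⊕ Fin d) (Fin d ⊕ Fin d) ℝ)
    (hA : ∀ t, (A t)ᵀ = A t)
    (Ψ : ℝ → Matrix (Fin d ⊕ Fin d) (Fin d ⊕ Fin d) ℝ)
    (hΨ : ∀ t, ∀ i j, HasDerivAt (fun s => Ψ s i j) (((Jmat d)⁻¹ * A t * Ψ t) i j) t)
    (h0 : (Ψ 0)ᵀ * Jmat d * Ψ 0 = Jmat d) :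
    ∀ t, (Ψ t)ᵀ * Jmat d * Ψ t = Jmat d := by
  intro t
  ext i j
  have hderiv : ∀ s, HasDerivAt (fun u => ((Ψ u)ᵀ * Jmat d * Ψ u) i j) 0 s := by
    intro s
    set Ψ' := (Jmat d)⁻¹ * A s * Ψ s with hΨ'
    have hform : ∀ u, ((Ψ u)ᵀ * Jmat d * Ψ u) i j
        = ∑ k, (∑ l, Ψ u l i * Jmat d l k) * Ψ u k j := by
      intro u
      simp [Matrix.mul_apply, Matrix.transpose_apply]
    have htarget : (Ψ'ᵀ * Jmat d * Ψ s + (Ψ s)ᵀ * Jmat d * Ψ') i j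
        = ∑ k, ((∑ l, Ψ' l i * Jmat d l k) * Ψ s k j
          + (∑ l, Ψ s l i * Jmat d l k) * Ψ' k j) := by
      simp [Matrix.mul_apply, Matrix.transpose_apply, Finset.sum_add_distrib]
    have hg : HasDerivAt (fun u => ∑ k, (∑ l, Ψ u l i * Jmat d l k) * Ψ u k j)
        (∑ k, ((∑ l, Ψ' l i * Jmat d l k) * Ψ s k j
          + (∑ l, Ψ s l i * Jmat d l k) * Ψ' k j)) s := by
      apply HasDerivAt.fun_sum
      intro k _
      exact (HasDerivAt.fun_sum fun l _ => (hΨ s l i).mul_const _).mul (hΨ s k j)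
    have h : HasDerivAt (fun u => ((Ψ u)ᵀ * Jmat d * Ψ u) i j)
        ((Ψ'ᵀ * Jmat d * Ψ s + (Ψ s)ᵀ * Jmat d * Ψ') i j) s := by
      rw [htarget]
      exact hg.congr_of_eventuallyEq (Filter.Eventually.of_forall hform)
    have hzero : Ψ'ᵀ * Jmat d * Ψ s + (Ψ s)ᵀ * Jmat d * Ψ' = 0 :=
      key_cancel d (A s) (Ψ s) (hA s)
    rw [hzero] at h
    simpa using h
  have hconst : ((Ψ t)ᵀ * Jmat d * Ψ t) i j = ((Ψ 0)ᵀ * Jmat d * Ψ 0) i j :=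
    is_const_of_deriv_eq_zero (f := fun u => ((Ψ u)ᵀ * Jmat d * Ψ u) i j)
      (fun s => (hderiv s).differentiableAt) (fun s => (hderiv s).deriv) t 0
  rw [hconst, h0]
end
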